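/- Let n, k, d be positive integers, μ₀ ≥ 1, δ ∈ (0,1), β ∈ (0, 1−δ), and set τ = (1−β−δ)/2 and α = (1−β−δ)/(12μ₀k). Let Ω ⊆ [n]×[n] be such that for every j ∈ [n] the set S_j = { i : (i,j) ∈ Ω } has exactly d elements. Let u_1, …, u_n ∈ ℝ^k satisfy ‖u_i‖₂ ≤ √(5μ₀k/n), and let u_1*, …, u_n* ∈ ℝ^k satisfy ‖u_i*‖₂ ≤ √(μ₀k/n). Define S_b(β) = { j ∈ [n] : ‖(n/d)·Σ_{i∈S_j} u_i u_iᵀ − I‖₂ > 1−β }, Q(τ) = { i ∈ [n] : ‖u_i u_iᵀ − u_i* u_i*ᵀ‖₂ > τ/n }, S_{b,1}(τ, α) = { j ∈ [n] : |S_j ∩ Q(τ)| ≥ αd }, and S_{b,2}(δ) = { j ∈ [n] : ‖(n/d)·Σ_{i∈S_j} u_i* u_i*ᵀ − I‖₂ > δ }. Then S_b(β) ⊆ S_{b,1}(τ, α) ∪ S_{b,2}(δ); in particular |S_b(β)| ≤ |S_{b,1}(τ, α)| + |S_{b,2}(δ)|. -/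

import Mathlib

open Matrix
open scoped Classical

/-- Euclidean norm of a vector in `ℝ^k`. -/
noncomputable def vecNorm {k : ℕ} (v : Fin k → ℝ) : ℝ := Real.sqrt (∑ i, v i ^ 2)

/-- Spectral norm (largest singular value) of a real matrix. -/
noncomputable def specNorm {m n : ℕ} (A : Matrix (Fin m) (Fin n) ℝ) : ℝ :=
  sSup {c : ℝ | ∃ x : Fin n → ℝ, vecNorm x = 1 ∧ c = vecNorm (A.mulVec x)}

/-- The left neighborhood `S_j = {i : (i,j) ∈ Ω}`. -/
def Sj {n : ℕ} (Ω : Finset (Fin n × Fin n)) (j : Fin n) : Finset (Fin n) :=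
  Finset.univ.filter fun i => (i, j) ∈ Ω

/-- The set of `bad` columns. -/
noncomputable def Sb {n k : ℕ} (Ω : Finset (Fin n × Fin n)) (d : ℕ)
    (u : Fin n → Fin k → ℝ) (β : ℝ) : Finset (Fin n) :=
  Finset.univ.filter fun j =>
    1 - β < specNorm (((n : ℝ) / d) • ∑ i ∈ Sj Ω j, vecMulVec (u i) (u i) - 1)

/-- The set `Q(τ)` of rows where the outer products of `u` and `u*` differ. -/
noncomputable def Qset {n k : ℕ} (u ustar : Fin n → Fin k → ℝ) (τ : ℝ) : Finset (Fin n) :=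
  Finset.univ.filter fun i =>
    τ / n < specNorm (vecMulVec (u i) (u i) - vecMulVec (ustar i) (ustar i))

/-- The set `S_{b,1}(τ,α)` of columns with at least `αd` neighbors in `Q(τ)`. -/
noncomputable def Sb1 {n k : ℕ} (Ω : Finset (Fin n × Fin n)) (d : ℕ)
    (u ustar : Fin n → Fin k → ℝ) (τ α : ℝ) : Finset (Fin n) :=
  Finset.univ.filter fun j => α * d ≤ ((Sj Ω j ∩ Qset u ustar τ).card : ℝ)

/-- The set `S_{b,2}(δ)`. -/
noncomputable def Sb2 {n k : ℕ} (Ω : Finset (Fin n × Fin n)) (d : ℕ)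
    (ustar : Fin n → Fin k → ℝ) (δ : ℝ) : Finset (Fin n) :=
  Finset.univ.filter fun j =>
    δ < specNorm (((n : ℝ) / d) • ∑ i ∈ Sj Ω j, vecMulVec (ustar i) (ustar i) - 1)

section Helpers

lemma vecNorm_eq_norm {k : ℕ} (v : EuclideanSpace ℝ (Fin k)) : vecNorm v = ‖v‖ := by
  rw [EuclideanSpace.norm_eq]
  unfold vecNorm
  congr 1
  exact Finset.sum_congr rfl fun i _ => (sq_abs _).symm

lemma vecNorm_nonneg {k : ℕ} (v : Fin k → ℝ) : 0 ≤ vecNorm v := Real.sqrt_nonneg _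

lemma vecNorm_sub_le {k : ℕ} (a b : Fin k → ℝ) : vecNorm (a - b) ≤ vecNorm a + vecNorm b := by
  have h := norm_sub_le (E := EuclideanSpace ℝ (Fin k)) (WithLp.toLp 2 a) (WithLp.toLp 2 b)
  simpa only [← vecNorm_eq_norm, WithLp.ofLp_sub, WithLp.ofLp_toLp] using h

lemma vecNorm_add_le {k : ℕ} (a b : Fin k → ℝ) : vecNorm (a + b) ≤ vecNorm a + vecNorm b := by
  have h := norm_add_le (E := EuclideanSpace ℝ (Fin k)) (WithLp.toLp 2 a) (WithLp.toLp 2 b)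
  simpa only [← vecNorm_eq_norm, WithLp.ofLp_add, WithLp.ofLp_toLp] using h

lemma vecNorm_smul {k : ℕ} (c : ℝ) (v : Fin k → ℝ) : vecNorm (c • v) = |c| * vecNorm v := by
  have h := norm_smul (α := ℝ) (β := EuclideanSpace ℝ (Fin k)) c (WithLp.toLp 2 v)
  simpa only [← vecNorm_eq_norm, Real.norm_eq_abs, WithLp.ofLp_smul, WithLp.ofLp_toLp] using h

lemma vecNorm_sum_le {k : ℕ} {ι : Type*} (s : Finset ι) (f : ι → Fin k → ℝ) :
    vecNorm (∑ i ∈ s, f i) ≤ ∑ i ∈ s, vecNorm (f i) := by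
  have h := norm_sum_le (E := EuclideanSpace ℝ (Fin k)) s (fun i => WithLp.toLp 2 (f i))
  simpa only [← vecNorm_eq_norm, WithLp.ofLp_sum, WithLp.ofLp_toLp] using h

lemma abs_dot_le {k : ℕ} (a x : Fin k → ℝ) : |a ⬝ᵥ x| ≤ vecNorm a * vecNorm x := by
  have h := Finset.sum_mul_sq_le_sq_mul_sq Finset.univ a x
  calc |a ⬝ᵥ x| = Real.sqrt ((a ⬝ᵥ x) ^ 2) := (Real.sqrt_sq_eq_abs _).symm
    _ ≤ Real.sqrt ((∑ i, a i ^ 2) * ∑ i, x i ^ 2) := Real.sqrt_le_sqrt h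
    _ = vecNorm a * vecNorm x := by
        rw [Real.sqrt_mul (by positivity)]; rfl

lemma frob_bound {m k : ℕ} (A : Matrix (Fin m) (Fin k) ℝ) (x : Fin k → ℝ) :
    vecNorm (A.mulVec x) ≤ Real.sqrt (∑ i, ∑ j, A i j ^ 2) * vecNorm x := by
  unfold vecNorm
  rw [← Real.sqrt_mul (by positivity)]
  apply Real.sqrt_le_sqrt
  rw [Finset.sum_mul]
  apply Finset.sum_le_sum
  intro i _
  have h := Finset.sum_mul_sq_le_sq_mul_sq Finset.univ (A i) x
  simpa [Matrix.mulVec, dotProduct] using h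

lemma specNorm_bddAbove {m k : ℕ} (A : Matrix (Fin m) (Fin k) ℝ) :
    BddAbove {c : ℝ | ∃ x : Fin k → ℝ, vecNorm x = 1 ∧ c = vecNorm (A.mulVec x)} := by
  refine ⟨Real.sqrt (∑ i, ∑ j, A i j ^ 2), ?_⟩
  rintro c ⟨x, hx, rfl⟩
  calc vecNorm (A.mulVec x) ≤ Real.sqrt (∑ i, ∑ j, A i j ^ 2) * vecNorm x := frob_bound A x
    _ = _ := by rw [hx, mul_one]

lemma vecNorm_mulVec_le_specNorm {m k : ℕ} (A : Matrix (Fin m) (Fin k) ℝ)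
    {x : Fin k → ℝ} (hx : vecNorm x = 1) : vecNorm (A.mulVec x) ≤ specNorm A :=
  le_csSup (specNorm_bddAbove A) ⟨x, hx, rfl⟩

lemma vecNorm_single_one {k : ℕ} (i : Fin k) : vecNorm (Pi.single i (1:ℝ)) = 1 := by
  unfold vecNorm
  simp [Pi.single_apply]

lemma specNorm_le {m k : ℕ} (hk : 0 < k) (A : Matrix (Fin m) (Fin k) ℝ) {C : ℝ}
    (h : ∀ x, vecNorm x = 1 → vecNorm (A.mulVec x) ≤ C) : specNorm A ≤ C := by
  apply csSup_le
  · exact ⟨_, Pi.single ⟨0, hk⟩ 1, vecNorm_single_one _, rfl⟩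
  · rintro c ⟨x, hx, rfl⟩; exact h x hx

lemma vecMulVec_mulVec {k : ℕ} (a b x : Fin k → ℝ) :
    (vecMulVec a b).mulVec x = (b ⬝ᵥ x) • a := by
  funext i
  simp only [Matrix.mulVec, Matrix.vecMulVec_apply, dotProduct, Pi.smul_apply,
    smul_eq_mul, Finset.sum_mul]
  exact Finset.sum_congr rfl fun j _ => by ring

lemma sum_mulVec' {m k : ℕ} {ι : Type*} (s : Finset ι) (A : ι → Matrix (Fin m) (Fin k) ℝ)
    (x : Fin k → ℝ) : (∑ i ∈ s, A i).mulVec x = ∑ i ∈ s, (A i).mulVec x := by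
  induction s using Finset.cons_induction with
  | empty => simp [Matrix.zero_mulVec]
  | cons a s ha ih => rw [Finset.sum_cons, Finset.sum_cons, Matrix.add_mulVec, ih]

lemma outer_bound {k : ℕ} (a : Fin k → ℝ) {x : Fin k → ℝ} (hx : vecNorm x = 1) :
    vecNorm ((vecMulVec a a).mulVec x) ≤ vecNorm a ^ 2 := by
  rw [vecMulVec_mulVec, vecNorm_smul]
  calc |a ⬝ᵥ x| * vecNorm a ≤ (vecNorm a * vecNorm x) * vecNorm a :=
        mul_le_mul_of_nonneg_right (abs_dot_le a x) (vecNorm_nonneg a)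
    _ = vecNorm a ^ 2 := by rw [hx]; ring

end Helpers

theorem stmt_4 {n k d : ℕ} (hn : 0 < n) (hk : 0 < k) (hd : 0 < d)
    (μ₀ δ β : ℝ) (hμ : 1 ≤ μ₀) (hδ : δ ∈ Set.Ioo (0 : ℝ) 1)
    (hβ : β ∈ Set.Ioo (0 : ℝ) (1 - δ))
    (Ω : Finset (Fin n × Fin n))
    (hΩ : ∀ j : Fin n, (Sj Ω j).card = d)
    (u ustar : Fin n → Fin k → ℝ)
    (hu : ∀ i, vecNorm (u i) ≤ Real.sqrt (5 * μ₀ * k / n))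
    (hustar : ∀ i, vecNorm (ustar i) ≤ Real.sqrt (μ₀ * k / n)) :
    Sb Ω d u β ⊆
      Sb1 Ω d u ustar ((1 - β - δ) / 2) ((1 - β - δ) / (12 * μ₀ * k)) ∪ Sb2 Ω d ustar δ ∧
    ((Sb Ω d u β).card ≤
      (Sb1 Ω d u ustar ((1 - β - δ) / 2) ((1 - β - δ) / (12 * μ₀ * k))).card
        + (Sb2 Ω d ustar δ).card) := by
  obtain ⟨hδ0, hδ1⟩ := hδ
  obtain ⟨hβ0, hβ1⟩ := hβ
  have hbd : (0:ℝ) < 1 - β - δ := by linarith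
  have hμ0 : (0:ℝ) < μ₀ := by linarith
  have hkR : (1:ℝ) ≤ (k:ℝ) := by exact_mod_cast hk
  have hnR : (0:ℝ) < (n:ℝ) := by exact_mod_cast hn
  have hdR : (0:ℝ) < (d:ℝ) := by exact_mod_cast hd
  have hμk : (0:ℝ) < μ₀ * k := by nlinarith
  set τ : ℝ := (1 - β - δ) / 2 with hτ
  set α : ℝ := (1 - β - δ) / (12 * μ₀ * k) with hα
  have hτ0 : 0 < τ := by rw [hτ]; linarith
  have hsub : Sb Ω d u β ⊆ Sb1 Ω d u ustar τ α ∪ Sb2 Ω d ustar δ := by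
    intro j hj
    by_contra hmem
    rw [Finset.mem_union, not_or] at hmem
    obtain ⟨h1, h2⟩ := hmem
    simp only [Sb, Finset.mem_filter, Finset.mem_univ, true_and] at hj
    simp only [Sb1, Finset.mem_filter, Finset.mem_univ, true_and, not_le] at h1
    simp only [Sb2, Finset.mem_filter, Finset.mem_univ, true_and, not_lt] at h2
    set S := Sj Ω j with hS
    set Q := Qset u ustar τ with hQ
    set c : ℝ := (n:ℝ)/(d:ℝ) with hc
    have hc0 : 0 ≤ c := by positivity
    have hbound : specNorm (c • ∑ i ∈ S, vecMulVec (u i) (u i) - 1) ≤ 1 - β := by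
      apply specNorm_le hk
      intro x hx
      set D : Fin n → Matrix (Fin k) (Fin k) ℝ :=
        fun i => vecMulVec (u i) (u i) - vecMulVec (ustar i) (ustar i) with hD
      set B : Matrix (Fin k) (Fin k) ℝ := c • ∑ i ∈ S, vecMulVec (ustar i) (ustar i) - 1
        with hB
      have hM : c • ∑ i ∈ S, vecMulVec (u i) (u i) - 1 = c • ∑ i ∈ S, D i + B := by
        rw [hD, hB, Finset.sum_sub_distrib, smul_sub]
        abel
      rw [hM, Matrix.add_mulVec, Matrix.smul_mulVec, sum_mulVec']
      -- bound individual pieces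
      have houter : ∀ i : Fin n, vecNorm ((D i).mulVec x) ≤ 6 * μ₀ * k / n := by
        intro i
        have h5 : (0:ℝ) ≤ 5 * μ₀ * k / n := by positivity
        have h1' : (0:ℝ) ≤ μ₀ * k / n := by positivity
        have hu2 : vecNorm (u i) ^ 2 ≤ 5 * μ₀ * k / n := by
          calc vecNorm (u i) ^ 2 ≤ Real.sqrt (5 * μ₀ * k / n) ^ 2 :=
                pow_le_pow_left₀ (vecNorm_nonneg _) (hu i) 2
            _ = 5 * μ₀ * k / n := Real.sq_sqrt h5
        have hus2 : vecNorm (ustar i) ^ 2 ≤ μ₀ * k / n := by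
          calc vecNorm (ustar i) ^ 2 ≤ Real.sqrt (μ₀ * k / n) ^ 2 :=
                pow_le_pow_left₀ (vecNorm_nonneg _) (hustar i) 2
            _ = μ₀ * k / n := Real.sq_sqrt h1'
        rw [hD]
        simp only
        rw [Matrix.sub_mulVec]
        calc vecNorm ((vecMulVec (u i) (u i)).mulVec x
                - (vecMulVec (ustar i) (ustar i)).mulVec x)
            ≤ vecNorm ((vecMulVec (u i) (u i)).mulVec x)
              + vecNorm ((vecMulVec (ustar i) (ustar i)).mulVec x) := vecNorm_sub_le _ _
          _ ≤ vecNorm (u i) ^ 2 + vecNorm (ustar i) ^ 2 :=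
              add_le_add (outer_bound _ hx) (outer_bound _ hx)
          _ ≤ 5 * μ₀ * k / n + μ₀ * k / n := add_le_add hu2 hus2
          _ = 6 * μ₀ * k / n := by ring
      have hgood : ∀ i ∈ S \ Q, vecNorm ((D i).mulVec x) ≤ τ / n := by
        intro i hi
        have hiQ := (Finset.mem_sdiff.mp hi).2
        rw [hQ] at hiQ
        simp only [Qset, Finset.mem_filter, Finset.mem_univ, true_and, not_lt] at hiQ
        exact (vecNorm_mulVec_le_specNorm _ hx).trans hiQ
      -- the sum bound
      have hsum : ∑ i ∈ S, vecNorm ((D i).mulVec x)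
          ≤ ((S ∩ Q).card : ℝ) * (6 * μ₀ * k / n) + ((S \ Q).card : ℝ) * (τ / n) := by
        rw [← Finset.sum_inter_add_sum_sdiff S Q (fun i => vecNorm ((D i).mulVec x))]
        apply add_le_add
        · calc ∑ i ∈ S ∩ Q, vecNorm ((D i).mulVec x)
              ≤ ∑ _i ∈ S ∩ Q, (6 * μ₀ * k / n) :=
                Finset.sum_le_sum fun i _ => houter i
            _ = ((S ∩ Q).card : ℝ) * (6 * μ₀ * k / n) := by
                rw [Finset.sum_const, nsmul_eq_mul]
        · calc ∑ i ∈ S \ Q, vecNorm ((D i).mulVec x)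
              ≤ ∑ _i ∈ S \ Q, (τ / n) := Finset.sum_le_sum hgood
            _ = ((S \ Q).card : ℝ) * (τ / n) := by
                rw [Finset.sum_const, nsmul_eq_mul]
      have hBx : vecNorm (B.mulVec x) ≤ δ := (vecNorm_mulVec_le_specNorm _ hx).trans h2
      have hcard1 : ((S ∩ Q).card : ℝ) ≤ α * d := le_of_lt h1
      have hcard2 : ((S \ Q).card : ℝ) ≤ (d : ℝ) := by
        have := Finset.card_le_card (Finset.sdiff_subset (s := S) (t := Q))
        rw [hΩ j] at this
        exact_mod_cast this
      have hcardQ0 : (0:ℝ) ≤ ((S ∩ Q).card : ℝ) := Nat.cast_nonneg _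
      have h6 : (0:ℝ) ≤ 6 * μ₀ * k / n := by positivity
      calc vecNorm (c • ∑ i ∈ S, (D i).mulVec x + B.mulVec x)
          ≤ vecNorm (c • ∑ i ∈ S, (D i).mulVec x) + vecNorm (B.mulVec x) :=
            vecNorm_add_le _ _
        _ = c * vecNorm (∑ i ∈ S, (D i).mulVec x) + vecNorm (B.mulVec x) := by
            rw [vecNorm_smul, abs_of_nonneg hc0]
        _ ≤ c * (∑ i ∈ S, vecNorm ((D i).mulVec x)) + δ := by
            apply add_le_add _ hBx
            exact mul_le_mul_of_nonneg_left (vecNorm_sum_le _ _) hc0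
        _ ≤ c * (((S ∩ Q).card : ℝ) * (6 * μ₀ * k / n) + ((S \ Q).card : ℝ) * (τ / n)) + δ := by
            apply add_le_add_left
            exact mul_le_mul_of_nonneg_left hsum hc0
        _ ≤ c * ((α * d) * (6 * μ₀ * k / n) + (d : ℝ) * (τ / n)) + δ := by
            apply add_le_add_left
            apply mul_le_mul_of_nonneg_left _ hc0
            apply add_le_add
            · exact mul_le_mul_of_nonneg_right hcard1 h6
            · exact mul_le_mul_of_nonneg_right hcard2 (by positivity)
        _ = α * (6 * μ₀ * k) + τ + δ := by
            rw [hc]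
            field_simp
        _ = 1 - β := by
            rw [hα, hτ]
            field_simp
            ring
    exact absurd hj (not_lt.mpr hbound)
  exact ⟨hsub, (Finset.card_le_card hsub).trans (Finset.card_union_le _ _)⟩
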